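/- Let A be an N×N nonnegative real matrix, G a subgroup of Aut(A), and Â the induced orbit matrix (Â_{αβ} = Σ_{j∈β} a_{ij} for i ∈ α). Then the spectral radii coincide: ρ(Â) = ρ(A). -/

import Mathlib

open scoped ENNReal NNReal

attribute [local instance] Matrix.linftyOpNormedRing Matrix.linftyOpNormedAlgebra

noncomputable def specRad (N : ℕ) (M : Matrix (Fin N) (Fin N) ℝ) : ℝ :=
  sSup ((fun z : ℂ => ‖z‖) '' spectrum ℂ (M.map (fun x => (x : ℂ))))

lemma spec_empty_aux {n : Type*} [Fintype n] [DecidableEq n] [IsEmpty n]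
    (M : Matrix n n ℂ) : spectrum ℂ M = ∅ := by
  haveI : Subsingleton (Matrix n n ℂ) := ⟨fun a b => by ext i; exact (IsEmpty.false i).elim⟩
  ext z
  simp [spectrum.mem_iff, isUnit_of_subsingleton]

lemma aux_sSup_eq {n : Type*} [Fintype n] [DecidableEq n] [Nonempty n] (M : Matrix n n ℂ) :
    sSup ((fun z : ℂ => ‖z‖) '' spectrum ℂ M) = (spectralRadius ℂ M).toReal := by
  have hS : (spectrum ℂ M).Nonempty := spectrum.nonempty M
  have hfin : (spectrum ℂ M).Finite := M.finite_spectrum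
  have bdd : BddAbove ((fun z : ℂ => ‖z‖) '' spectrum ℂ M) := (hfin.image _).bddAbove
  have hne : ((fun z : ℂ => ‖z‖) '' spectrum ℂ M).Nonempty := hS.image _
  obtain ⟨k₀, hk₀⟩ := hS
  have hs0 : 0 ≤ sSup ((fun z : ℂ => ‖z‖) '' spectrum ℂ M) :=
    le_trans (norm_nonneg k₀) (le_csSup bdd ⟨k₀, hk₀, rfl⟩)
  have hle : spectralRadius ℂ M ≤ ENNReal.ofReal (sSup ((fun z : ℂ => ‖z‖) '' spectrum ℂ M)) := by
    rw [spectralRadius]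
    refine iSup₂_le fun k hk => ?_
    rw [← ENNReal.ofReal_coe_nnreal, coe_nnnorm]
    exact ENNReal.ofReal_le_ofReal (le_csSup bdd ⟨k, hk, rfl⟩)
  have htop : spectralRadius ℂ M ≠ ⊤ := ne_top_of_le_ne_top ENNReal.ofReal_ne_top hle
  refine le_antisymm ?_ (ENNReal.toReal_le_of_le_ofReal hs0 hle)
  refine csSup_le hne ?_
  rintro x ⟨k, hk, rfl⟩
  have h1 : (‖k‖₊ : ℝ≥0∞) ≤ spectralRadius ℂ M := le_iSup₂ (f := fun k _ => (‖k‖₊ : ℝ≥0∞)) k hk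
  have := ENNReal.toReal_mono htop h1
  simpa using this

lemma sup_comp_surj {α β γ : Type*} [Fintype α] [Fintype β] [DecidableEq β]
    [SemilatticeSup γ] [OrderBot γ] {orb : α → β} (h : Function.Surjective orb) (f : β → γ) :
    Finset.univ.sup f = Finset.univ.sup (f ∘ orb) := by
  rw [← Finset.image_univ_of_surjective h, Finset.sup_image]

theorem stmt4 (N : ℕ) (A : Matrix (Fin N) (Fin N) ℝ) (hnn : ∀ i j, 0 ≤ A i j)
    (G : Subgroup (Equiv.Perm (Fin N)))
    (hG : ∀ π ∈ G, ∀ i j, A (π i) (π j) = A i j)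
    (O : Type) [Fintype O] [DecidableEq O]
    (orb : Fin N → O) (horbsurj : Function.Surjective orb)
    (horb : ∀ i j, orb i = orb j ↔ ∃ π ∈ G, π i = j)
    (Ahat : Matrix O O ℝ)
    (hAhat : ∀ (i : Fin N) (β : O),
      Ahat (orb i) β = ∑ j ∈ Finset.univ.filter (fun j => orb j = β), A i j) :
    sSup ((fun z : ℂ => ‖z‖) '' spectrum ℂ (Ahat.map (fun x => (x : ℂ))))
      = specRad N A := by
  rcases Nat.eq_zero_or_pos N with hN | hN
  · subst hN
    haveI : IsEmpty O := ⟨fun o => by obtain ⟨i, -⟩ := horbsurj o; exact i.elim0⟩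
    rw [specRad, spec_empty_aux, spec_empty_aux]
  · haveI : Nonempty (Fin N) := ⟨⟨0, hN⟩⟩
    haveI : Nonempty O := ⟨orb ⟨0, hN⟩⟩
    -- key power identity
    have hpow : ∀ (n : ℕ) (i : Fin N) (β : O),
        (Ahat ^ n) (orb i) β = ∑ j ∈ Finset.univ.filter (fun j => orb j = β), (A ^ n) i j := by
      intro n
      induction n with
      | zero =>
        intro i β
        simp only [pow_zero, Matrix.one_apply]
        rw [Finset.sum_ite_eq]
        simp [eq_comm]
      | succ n ih =>
        intro i β
        rw [pow_succ', pow_succ', Matrix.mul_apply]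
        have key : ∀ γ, Ahat (orb i) γ * (Ahat ^ n) γ β
            = ∑ k ∈ Finset.univ.filter (fun k => orb k = γ),
                A i k * ∑ j ∈ Finset.univ.filter (fun j => orb j = β), (A ^ n) k j := by
          intro γ
          rw [hAhat, Finset.sum_mul]
          refine Finset.sum_congr rfl fun k hk => ?_
          rw [Finset.mem_filter] at hk
          rw [← hk.2, ih]
        simp_rw [key]
        rw [Finset.sum_fiberwise]
        simp_rw [Finset.mul_sum]
        rw [Finset.sum_comm]
        exact Finset.sum_congr rfl fun j _ => (Matrix.mul_apply).symm
    have hApow : ∀ (n : ℕ) (i j : Fin N), 0 ≤ (A ^ n) i j := by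
      intro n
      induction n with
      | zero => intro i j; simp [Matrix.one_apply]; split <;> norm_num
      | succ n ih =>
        intro i j
        rw [pow_succ', Matrix.mul_apply]
        exact Finset.sum_nonneg fun k _ => mul_nonneg (hnn i k) (ih k j)
    -- norms of powers agree
    have hnorm : ∀ n : ℕ,
        ‖(Ahat.map (fun x => (x : ℂ))) ^ n‖₊ = ‖(A.map (fun x => (x : ℂ))) ^ n‖₊ := by
      intro n
      have hm1 : (Ahat.map (fun x => (x : ℂ))) ^ n = (Ahat ^ n).map (fun x => (x : ℂ)) := by
        exact
          (map_pow (Complex.ofRealHom.mapMatrix) Ahat n).symm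
      have hm2 : (A.map (fun x => (x : ℂ))) ^ n = (A ^ n).map (fun x => (x : ℂ)) := by
        exact
          (map_pow (Complex.ofRealHom.mapMatrix) A n).symm
      rw [hm1, hm2, Matrix.linfty_opNNNorm_def, Matrix.linfty_opNNNorm_def,
        sup_comp_surj horbsurj]
      refine Finset.sup_congr rfl fun i _ => ?_
      simp only [Function.comp_apply]
      refine NNReal.coe_injective ?_
      rw [NNReal.coe_sum, NNReal.coe_sum]
      simp only [coe_nnnorm, Matrix.map_apply, Complex.norm_real, Real.norm_eq_abs]
      have h1 : ∑ β, |(Ahat ^ n) (orb i) β| = ∑ β, (Ahat ^ n) (orb i) β := by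
        refine Finset.sum_congr rfl fun β _ => abs_of_nonneg ?_
        rw [hpow]
        exact Finset.sum_nonneg fun j _ => hApow n i j
      have h2 : ∑ j, |(A ^ n) i j| = ∑ j, (A ^ n) i j :=
        Finset.sum_congr rfl fun j _ => abs_of_nonneg (hApow n i j)
      rw [h1, h2]
      simp_rw [hpow]
      exact Finset.sum_fiberwise _ _ _
    -- Gelfand
    have h1 := spectrum.pow_nnnorm_pow_one_div_tendsto_nhds_spectralRadius
      (Ahat.map (fun x => (x : ℂ)))
    have h2 := spectrum.pow_nnnorm_pow_one_div_tendsto_nhds_spectralRadius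
      (A.map (fun x => (x : ℂ)))
    have heq : (fun n : ℕ => (‖(Ahat.map (fun x => (x : ℂ))) ^ n‖₊ : ℝ≥0∞) ^ (1 / n : ℝ))
        = fun n : ℕ => (‖(A.map (fun x => (x : ℂ))) ^ n‖₊ : ℝ≥0∞) ^ (1 / n : ℝ) := by
      funext n; rw [hnorm n]
    rw [heq] at h1
    have hsr : spectralRadius ℂ (Ahat.map (fun x => (x : ℂ)))
        = spectralRadius ℂ (A.map (fun x => (x : ℂ))) := tendsto_nhds_unique h1 h2
    rw [specRad, aux_sSup_eq, aux_sSup_eq, hsr]
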